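/- Let N, d ≥ 1, B > 0, let W ∈ ℝ^{N×N} be doubly stochastic with ‖W − (1/N)𝟙𝟙ᵀ‖_* ≤ 1, let ε ≥ 0 and τ ≥ 1 satisfy 6NBτε ≤ 1, and let (Θ^t)_{t∈ℕ} in ℝ^{N×d} satisfy Θ^{t+1} = WΘ^t + ε G^t for every t ≤ τ, where each G^t ∈ ℝ^{N×d} has rows g_i^t with ‖g_i^t‖ ≤ B(‖θ_i^t‖ + 1) (θ_i^t being the rows of Θ^t). Write θ̄^t for the row average and S^t for the consensus error of Θ^t. Then for every k ≤ τ, ‖θ̄^k − θ̄^0‖ ≤ (1/(3N)) (‖θ̄^0‖ + √(S^0) + 1). -/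

import Mathlib

/-- Euclidean norm of a vector in `ℝ^d` given as a plain function. -/
noncomputable def enorm {d : ℕ} (v : Fin d → ℝ) : ℝ :=
  ‖(WithLp.equiv 2 (Fin d → ℝ)).symm v‖

/-- Spectral (ℓ₂ operator) norm of a square matrix. -/
noncomputable def specNorm {N : ℕ} (M : Matrix (Fin N) (Fin N) ℝ) : ℝ :=
  ‖Matrix.toEuclideanCLM (𝕜 := ℝ) M‖

/-- A matrix is doubly stochastic: nonnegative entries, all row sums and column sums equal 1. -/
def DoublyStochastic {N : ℕ} (W : Matrix (Fin N) (Fin N) ℝ) : Prop :=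
  (∀ i j, 0 ≤ W i j) ∧ (∀ i, ∑ j, W i j = 1) ∧ (∀ j, ∑ i, W i j = 1)

/-- Row average of a matrix `Θ ∈ ℝ^{N×d}`: `θ̄ = (1/N) Θᵀ 𝟙`. -/
noncomputable def rowAvg {N d : ℕ} (Θ : Matrix (Fin N) (Fin d) ℝ) : Fin d → ℝ :=
  fun j => (N : ℝ)⁻¹ * ∑ i, Θ i j

/-- Consensus error `S = ∑ᵢ ‖θᵢ − θ̄‖²` of a matrix of stacked iterates. -/
noncomputable def consErr {N d : ℕ} (Θ : Matrix (Fin N) (Fin d) ℝ) : ℝ :=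
  ∑ i, (_root_.enorm (fun j => Θ i j - rowAvg Θ j)) ^ 2

/- Auxiliary lemmas about `enorm`. -/

lemma enorm_nonneg' {d : ℕ} (v : Fin d → ℝ) : 0 ≤ _root_.enorm v := norm_nonneg _

lemma enorm_add_le' {d : ℕ} (u v : Fin d → ℝ) :
    _root_.enorm (fun j => u j + v j) ≤ _root_.enorm u + _root_.enorm v := norm_add_le _ _

lemma enorm_smul' {d : ℕ} (c : ℝ) (v : Fin d → ℝ) :
    _root_.enorm (fun j => c * v j) = |c| * _root_.enorm v := by
  have : (WithLp.equiv 2 (Fin d → ℝ)).symm (fun j => c * v j)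
      = c • (WithLp.equiv 2 (Fin d → ℝ)).symm v := rfl
  rw [_root_.enorm, this, norm_smul, Real.norm_eq_abs, _root_.enorm]

lemma enorm_sum_le' {d : ℕ} {ι : Type*} (s : Finset ι) (f : ι → (Fin d → ℝ)) :
    _root_.enorm (fun j => ∑ t ∈ s, f t j) ≤ ∑ t ∈ s, _root_.enorm (f t) := by
  have h1 : (fun j => ∑ t ∈ s, f t j) = ∑ t ∈ s, f t := by ext j; simp
  have h2 : (WithLp.equiv 2 (Fin d → ℝ)).symm (fun j => ∑ t ∈ s, f t j)
      = ∑ t ∈ s, (WithLp.equiv 2 (Fin d → ℝ)).symm (f t) := by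
    rw [h1]; exact map_sum ((WithLp.linearEquiv 2 ℝ (Fin d → ℝ)).symm) f s
  rw [_root_.enorm, h2]
  exact norm_sum_le _ _

set_option maxHeartbeats 1000000 in
/-- Drift of the average iterate from initialization: for all `k ≤ τ`,
`‖θ̄^k − θ̄^0‖ ≤ (1/(3N)) (‖θ̄^0‖ + √(S^0) + 1)`. -/
theorem average_drift_initial (N d : ℕ) (hN : 1 ≤ N) (hd : 1 ≤ d)
    (B ε : ℝ) (hB : 0 < B) (hε : 0 ≤ ε)
    (W : Matrix (Fin N) (Fin N) ℝ) (hW : DoublyStochastic W)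
    (hWspec : specNorm (W - (N : ℝ)⁻¹ •
      Matrix.of (fun (_ : Fin N) (_ : Fin N) => (1 : ℝ))) ≤ 1)
    (τ : ℕ) (hτ : 1 ≤ τ) (hstep : 6 * N * B * τ * ε ≤ 1)
    (Θ G : ℕ → Matrix (Fin N) (Fin d) ℝ)
    (hupdate : ∀ t, t ≤ τ → Θ (t + 1) = W * Θ t + ε • G t)
    (hG : ∀ t i, _root_.enorm (fun j => G t i j) ≤ B * (_root_.enorm (fun j => Θ t i j) + 1)) :
    ∀ k, k ≤ τ →
      _root_.enorm (fun j => rowAvg (Θ k) j - rowAvg (Θ 0) j)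
        ≤ (1 / (3 * N)) *
            (_root_.enorm (rowAvg (Θ 0)) + Real.sqrt (consErr (Θ 0)) + 1) := by
  obtain ⟨hWpos, hWrow, hWcol⟩ := hW
  have hN0 : (1 : ℝ) ≤ (N : ℝ) := by exact_mod_cast hN
  have hNpos : (0 : ℝ) < (N : ℝ) := by linarith
  have hτ0 : (1 : ℝ) ≤ (τ : ℝ) := by exact_mod_cast hτ
  set a : ℕ → ℝ := fun t => ∑ i, _root_.enorm (fun j => Θ t i j) with ha
  have ha_nonneg : ∀ t, 0 ≤ a t :=
    fun t => Finset.sum_nonneg (fun i _ => enorm_nonneg' _)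
  -- bound ε B τ
  have hx0 : 0 ≤ ε * B := mul_nonneg hε hB.le
  have hxN : ε * B * τ ≤ 1 / (6 * N) := by
    rw [le_div_iff₀ (by linarith)]
    nlinarith
  have hx6 : ε * B * τ ≤ 1 / 6 := by
    have : 1 / (6 * (N : ℝ)) ≤ 1 / 6 := by
      apply div_le_div_of_nonneg_left (by norm_num) (by norm_num) (by linarith)
    linarith
  -- row-sum recursion
  have hrow : ∀ t, t ≤ τ → a (t + 1) ≤ a t + ε * B * (a t + N) := by
    intro t ht
    have h1 : ∀ i, _root_.enorm (fun j => Θ (t + 1) i j)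
        ≤ (∑ l, W i l * _root_.enorm (fun j => Θ t l j)) + ε * (B * (_root_.enorm (fun j => Θ t i j) + 1)) := by
      intro i
      have he : (fun j => Θ (t + 1) i j)
          = fun j => (∑ l, W i l * Θ t l j) + ε * G t i j := by
        funext j
        rw [hupdate t ht]
        simp [Matrix.mul_apply, Matrix.add_apply]
      rw [he]
      have step1 := enorm_add_le' (fun j => ∑ l, W i l * Θ t l j) (fun j => ε * G t i j)
      have step2 : _root_.enorm (fun j => ∑ l, W i l * Θ t l j)
          ≤ ∑ l, W i l * _root_.enorm (fun j => Θ t l j) := by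
        refine le_trans (enorm_sum_le' Finset.univ (fun l => fun j => W i l * Θ t l j)) ?_
        refine le_of_eq (Finset.sum_congr rfl fun l _ => ?_)
        rw [enorm_smul', abs_of_nonneg (hWpos i l)]
      have step3 : _root_.enorm (fun j => ε * G t i j) ≤ ε * (B * (_root_.enorm (fun j => Θ t i j) + 1)) := by
        rw [enorm_smul', abs_of_nonneg hε]
        exact mul_le_mul_of_nonneg_left (hG t i) hε
      linarith
    calc a (t + 1) ≤ ∑ i, ((∑ l, W i l * _root_.enorm (fun j => Θ t l j))
          + ε * (B * (_root_.enorm (fun j => Θ t i j) + 1))) :=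
            Finset.sum_le_sum (fun i _ => h1 i)
      _ = (∑ i, ∑ l, W i l * _root_.enorm (fun j => Θ t l j))
          + ∑ i, ε * (B * (_root_.enorm (fun j => Θ t i j) + 1)) := Finset.sum_add_distrib
      _ = a t + ε * B * (a t + N) := by
          have e1 : (∑ i, ∑ l, W i l * _root_.enorm (fun j => Θ t l j)) = a t := by
            rw [Finset.sum_comm]
            simp_rw [← Finset.sum_mul, hWcol, one_mul]
            rfl
          have e2 : (∑ i : Fin N, ε * (B * (_root_.enorm (fun j => Θ t i j) + 1)))
              = ε * B * (a t + N) := by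
            rw [← Finset.mul_sum, ← Finset.mul_sum, Finset.sum_add_distrib]
            simp [ha]
            ring
          rw [e1, e2]
  -- discrete Gronwall
  have hgr : ∀ t, t ≤ τ → a t + N ≤ (1 + 2 * (ε * B) * t) * (a 0 + N) := by
    intro t
    induction t with
    | zero => intro _; simp
    | succ t ih =>
      intro ht
      have ht' : t ≤ τ := by omega
      have iht := ih ht'
      have hstep' := hrow t ht'
      have hxt : ε * B * t ≤ 1 / 6 := by
        have : (t : ℝ) ≤ (τ : ℝ) := by exact_mod_cast ht'
        nlinarith
      have ha0N : 0 ≤ a 0 + N := by have := ha_nonneg 0; linarith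
      have h2 : a (t + 1) + N ≤ (1 + ε * B) * (a t + N) := by nlinarith
      have h3 : (1 + ε * B) * (a t + N) ≤ (1 + ε * B) * ((1 + 2 * (ε * B) * t) * (a 0 + N)) :=
        mul_le_mul_of_nonneg_left iht (by linarith)
      have hq : ε * B * (ε * B * t) ≤ ε * B * (1 / 6) :=
        mul_le_mul_of_nonneg_left hxt hx0
      have key : (1 + ε * B) * (1 + 2 * (ε * B) * (t : ℝ)) ≤ 1 + 2 * (ε * B) * ((t : ℝ) + 1) := by
        nlinarith [hq, hx0]
      have h4 := mul_le_mul_of_nonneg_right key ha0N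
      push_cast
      nlinarith [h2, h3, h4]
  -- average recursion
  have havg : ∀ t, t ≤ τ → ∀ j, rowAvg (Θ (t + 1)) j = rowAvg (Θ t) j + ε * rowAvg (G t) j := by
    intro t ht j
    rw [hupdate t ht]
    simp only [rowAvg, Matrix.add_apply, Matrix.smul_apply, smul_eq_mul, Matrix.mul_apply]
    rw [Finset.sum_add_distrib]
    have e1 : (∑ i, ∑ l, W i l * Θ t l j) = ∑ l, Θ t l j := by
      rw [Finset.sum_comm]
      simp_rw [← Finset.sum_mul, hWcol, one_mul]
    rw [e1, ← Finset.mul_sum]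
    ring
  -- telescoping
  have htel : ∀ k, k ≤ τ → ∀ j,
      rowAvg (Θ k) j - rowAvg (Θ 0) j = ∑ t ∈ Finset.range k, ε * rowAvg (G t) j := by
    intro k
    induction k with
    | zero => intro _ j; simp
    | succ k ih =>
      intro hk j
      rw [Finset.sum_range_succ, ← ih (by omega) j, havg k (by omega) j]
      ring
  -- bound on average of G
  have hGavg : ∀ t, _root_.enorm (rowAvg (G t)) ≤ (N : ℝ)⁻¹ * (B * (a t + N)) := by
    intro t
    have h0 : rowAvg (G t) = fun j => (N : ℝ)⁻¹ * (fun j' => ∑ i, G t i j') j := rfl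
    rw [h0, enorm_smul', abs_of_nonneg (by positivity)]
    have h1 : _root_.enorm (fun j => ∑ i, G t i j) ≤ ∑ i, _root_.enorm (fun j => G t i j) :=
      enorm_sum_le' Finset.univ (fun i => fun j => G t i j)
    have h2 : (∑ i, _root_.enorm (fun j => G t i j)) ≤ ∑ i, B * (_root_.enorm (fun j => Θ t i j) + 1) :=
      Finset.sum_le_sum (fun i _ => hG t i)
    have h3 : (∑ i : Fin N, B * (_root_.enorm (fun j => Θ t i j) + 1)) = B * (a t + N) := by
      rw [← Finset.mul_sum, Finset.sum_add_distrib]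
      simp [ha]
    have : _root_.enorm (fun j => ∑ i, G t i j) ≤ B * (a t + N) := by
      rw [← h3]; exact h1.trans h2
    have hNi : (0 : ℝ) ≤ (N : ℝ)⁻¹ := by positivity
    exact mul_le_mul_of_nonneg_left this hNi
  -- bound a 0
  set E : ℝ := _root_.enorm (rowAvg (Θ 0)) + Real.sqrt (consErr (Θ 0)) + 1 with hE
  have hS_nonneg : 0 ≤ consErr (Θ 0) :=
    Finset.sum_nonneg fun i _ => sq_nonneg _
  have hE_nonneg : 0 ≤ E := by
    have := enorm_nonneg' (rowAvg (Θ 0))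
    have := Real.sqrt_nonneg (consErr (Θ 0))
    simp only [hE]; linarith
  have ha0 : a 0 + N ≤ N * E := by
    have h1 : ∀ i : Fin N, _root_.enorm (fun j => Θ 0 i j)
        ≤ _root_.enorm (fun j => Θ 0 i j - rowAvg (Θ 0) j) + _root_.enorm (rowAvg (Θ 0)) := by
      intro i
      have he : (fun j => Θ 0 i j)
          = fun j => (Θ 0 i j - rowAvg (Θ 0) j) + rowAvg (Θ 0) j := by funext j; ring
      rw [he]
      exact enorm_add_le' _ _
    have h2 : a 0 ≤ (∑ i, _root_.enorm (fun j => Θ 0 i j - rowAvg (Θ 0) j))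
        + N * _root_.enorm (rowAvg (Θ 0)) := by
      calc a 0 ≤ ∑ i, (_root_.enorm (fun j => Θ 0 i j - rowAvg (Θ 0) j) + _root_.enorm (rowAvg (Θ 0))) :=
            Finset.sum_le_sum (fun i _ => h1 i)
        _ = (∑ i, _root_.enorm (fun j => Θ 0 i j - rowAvg (Θ 0) j)) + N * _root_.enorm (rowAvg (Θ 0)) := by
            rw [Finset.sum_add_distrib]; simp [mul_comm]
    have h3 : (∑ i, _root_.enorm (fun j => Θ 0 i j - rowAvg (Θ 0) j))
        ≤ N * Real.sqrt (consErr (Θ 0)) := by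
      set D : Fin N → ℝ := fun i => _root_.enorm (fun j => Θ 0 i j - rowAvg (Θ 0) j) with hD
      have hDsum : 0 ≤ ∑ i, D i := Finset.sum_nonneg fun i _ => enorm_nonneg' _
      have hcs : (∑ i, D i) ^ 2 ≤ (N : ℝ) * ∑ i, D i ^ 2 := by
        have := sq_sum_le_card_mul_sum_sq (s := Finset.univ) (f := D)
        simpa using this
      have hconsd : consErr (Θ 0) = ∑ i, D i ^ 2 := rfl
      have h4 : (∑ i, D i) ^ 2 ≤ ((N : ℝ) * Real.sqrt (consErr (Θ 0))) ^ 2 := by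
        have : ((N : ℝ) * Real.sqrt (consErr (Θ 0))) ^ 2
            = (N : ℝ) ^ 2 * consErr (Θ 0) := by
          rw [mul_pow, Real.sq_sqrt hS_nonneg]
        rw [this, hconsd]
        have hsq : (0:ℝ) ≤ ∑ i, D i ^ 2 := Finset.sum_nonneg fun i _ => sq_nonneg (D i)
        nlinarith [hsq]
      have h5 : 0 ≤ (N : ℝ) * Real.sqrt (consErr (Θ 0)) := by positivity
      nlinarith
    simp only [hE]
    nlinarith
  -- final
  intro k hk
  have hk' : (k : ℝ) ≤ (τ : ℝ) := by exact_mod_cast hk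
  have hfun : (fun j => rowAvg (Θ k) j - rowAvg (Θ 0) j)
      = fun j => ∑ t ∈ Finset.range k, ε * rowAvg (G t) j := funext (htel k hk)
  rw [hfun]
  have c3 : ∀ t ∈ Finset.range k,
      _root_.enorm (fun j => ε * rowAvg (G t) j) ≤ ε * ((N : ℝ)⁻¹ * (B * ((4 / 3) * (a 0 + N)))) := by
    intro t htk
    have ht : t ≤ τ := le_trans (Nat.le_of_lt (Finset.mem_range.mp htk)) hk
    have hg := hgr t ht
    have hxt : ε * B * t ≤ 1 / 6 := by
      have h : (t : ℝ) ≤ (τ : ℝ) := by exact_mod_cast ht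
      nlinarith
    have ha0N : 0 ≤ a 0 + N := by have := ha_nonneg 0; linarith
    have hbound : a t + N ≤ 4 / 3 * (a 0 + N) := by
      have hpos : 0 ≤ (1 / 3 - 2 * (ε * B * (t : ℝ))) := by linarith
      nlinarith [mul_nonneg ha0N hpos]
    rw [enorm_smul', abs_of_nonneg hε]
    have := hGavg t
    have hNi : (0 : ℝ) ≤ (N : ℝ)⁻¹ := by positivity
    have h2 : (N : ℝ)⁻¹ * (B * (a t + N)) ≤ (N : ℝ)⁻¹ * (B * (4 / 3 * (a 0 + N))) := by
      apply mul_le_mul_of_nonneg_left _ hNi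
      exact mul_le_mul_of_nonneg_left hbound hB.le
    exact mul_le_mul_of_nonneg_left (this.trans h2) hε
  calc _root_.enorm (fun j => ∑ t ∈ Finset.range k, ε * rowAvg (G t) j)
      ≤ ∑ t ∈ Finset.range k, _root_.enorm (fun j => ε * rowAvg (G t) j) :=
        enorm_sum_le' _ _
    _ ≤ ∑ _t ∈ Finset.range k, ε * ((N : ℝ)⁻¹ * (B * ((4 / 3) * (a 0 + N)))) :=
        Finset.sum_le_sum c3
    _ = (k : ℝ) * (ε * ((N : ℝ)⁻¹ * (B * ((4 / 3) * (a 0 + N))))) := by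
        rw [Finset.sum_const, Finset.card_range]; simp
    _ ≤ (1 / (3 * N)) * E := by
        have ha0N : 0 ≤ a 0 + N := by have := ha_nonneg 0; linarith
        have hterm : 0 ≤ ε * ((N : ℝ)⁻¹ * (B * ((4 / 3) * (a 0 + N)))) := by positivity
        have step1 : (k : ℝ) * (ε * ((N : ℝ)⁻¹ * (B * ((4 / 3) * (a 0 + N)))))
            ≤ (τ : ℝ) * (ε * ((N : ℝ)⁻¹ * (B * ((4 / 3) * (a 0 + N))))) :=
          mul_le_mul_of_nonneg_right hk' hterm
        have hNne : (N : ℝ) ≠ 0 := ne_of_gt hNpos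
        have step2 : (τ : ℝ) * (ε * ((N : ℝ)⁻¹ * (B * ((4 / 3) * (a 0 + N)))))
            ≤ (1 / (6 * N)) * ((N : ℝ)⁻¹ * ((4 / 3) * (a 0 + N))) := by
          have : (τ : ℝ) * (ε * ((N : ℝ)⁻¹ * (B * ((4 / 3) * (a 0 + N)))))
              = (ε * B * τ) * ((N : ℝ)⁻¹ * ((4 / 3) * (a 0 + N))) := by ring
          rw [this]
          apply mul_le_mul_of_nonneg_right hxN (by positivity)
        have step3 : (1 / (6 * (N : ℝ))) * ((N : ℝ)⁻¹ * ((4 / 3) * (a 0 + N)))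
            ≤ (1 / (3 * N)) * E := by
          have key : (1 / (6 * (N : ℝ))) * ((N : ℝ)⁻¹ * ((4 / 3) * ((N : ℝ) * E)))
              = (2 / (9 * N)) * E := by
            field_simp
            ring
          have mono : (1 / (6 * (N : ℝ))) * ((N : ℝ)⁻¹ * ((4 / 3) * (a 0 + N)))
              ≤ (1 / (6 * (N : ℝ))) * ((N : ℝ)⁻¹ * ((4 / 3) * ((N : ℝ) * E))) := by
            apply mul_le_mul_of_nonneg_left _ (by positivity)
            apply mul_le_mul_of_nonneg_left _ (by positivity)
            apply mul_le_mul_of_nonneg_left ha0 (by norm_num)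
          have last : (2 / (9 * (N : ℝ))) * E ≤ (1 / (3 * N)) * E := by
            apply mul_le_mul_of_nonneg_right _ hE_nonneg
            rw [div_le_div_iff₀ (by positivity) (by positivity)]
            nlinarith
          calc (1 / (6 * (N : ℝ))) * ((N : ℝ)⁻¹ * ((4 / 3) * (a 0 + N)))
              ≤ (1 / (6 * (N : ℝ))) * ((N : ℝ)⁻¹ * ((4 / 3) * ((N : ℝ) * E))) := mono
            _ = (2 / (9 * N)) * E := key
            _ ≤ (1 / (3 * N)) * E := last
        linarith
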